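/- arXiv:2602.15194 — 3 statements merged into one kernel-verified Lean document; each statement's English description precedes it below -/
import Mathlib

section
/- Let N = 2K + 1 be odd, d, m ∈ ℕ, ω₀ > 0, ω_f ∈ ℝ, J_j ∈ ℂ^{d×d} for j = 0, …, N−1, and B ∈ ℂ^{d×m}. Let θ_j = 2πj/N, let D ∈ ℂ^{N×N} be the Fourier spectral differentiation matrix with entries D_{jk} = (1/2)(−1)^{j−k} / sin(π(j−k)/N) for j ≠ k and D_{jj} = 0, and define the time-spectral operator L_TS = blkdiag(iω_f I_d − J_0, …, iω_f I_d − J_{N−1}) + ω₀ (D ⊗ I_d) and B_TS = blkdiag(B, …, B) (N copies). Define Ĵ_k = (1/N) Σ_{j=0}^{N−1} J_j e^{−i k θ_j} for k ∈ ℤ (so Ĵ is N-periodic in k), and the harmonic operator L_HR ∈ ℂ^{Nd×Nd} with blocks indexed by wavenumbers k, ℓ ∈ {−K, …, K}: diagonal blocks i(ω_f + kω₀)I_d − Ĵ₀ and off-diagonal blocks −Ĵ_{k−ℓ}, together with B_HR = blkdiag(B, …, B). Then L_TS is invertible if and only if L_HR is invertible, and in that case σ₁(L_TS^{−1} B_TS)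 = σ₁(L_HR^{−1} B_HR). -/
open Complex Matrix Finset

noncomputable section TSRaux

/-- The basic phase `exp(2πi t / N)` with `N = 2K+1`. -/
def tsrω (K : ℕ) (t : ℤ) : ℂ :=
  Complex.exp ((2 * Real.pi * Complex.I / ((2 * K + 1 : ℕ) : ℂ)) * t)

variable {K : ℕ}

lemma tsrN_ne_zero : ((2 * K + 1 : ℕ) : ℂ) ≠ 0 :=
  Nat.cast_ne_zero.mpr (by omega)

lemma tsrN_ne_zero' : ((2 : ℂ) * K + 1) ≠ 0 := by
  have h := tsrN_ne_zero (K := K)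
  push_cast at h
  exact h

lemma tsrπI_ne_zero : (2 * (Real.pi : ℂ) * Complex.I) ≠ 0 := by
  simp [Real.pi_ne_zero, Complex.I_ne_zero]

lemma tsrω_add (s t : ℤ) : tsrω K (s + t) = tsrω K s * tsrω K t := by
  rw [tsrω, tsrω, tsrω, ← Complex.exp_add]
  push_cast
  ring_nf

lemma tsrω_zero : tsrω K 0 = 1 := by simp [tsrω]

lemma tsrω_ne_zero (t : ℤ) : tsrω K t ≠ 0 := Complex.exp_ne_zero _

lemma tsrω_mul_nat (t : ℤ) (j : ℕ) : tsrω K (t * j) = tsrω K t ^ j := by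
  rw [tsrω, tsrω, ← Complex.exp_nat_mul]
  congr 1
  push_cast
  ring

lemma tsrω_eq_one_iff {t : ℤ} : tsrω K t = 1 ↔ ((2 * K + 1 : ℕ) : ℤ) ∣ t := by
  have hN2 := tsrN_ne_zero' (K := K)
  rw [tsrω, Complex.exp_eq_one_iff]
  constructor
  · rintro ⟨n, hn⟩
    refine ⟨n, ?_⟩
    push_cast at hn
    field_simp at hn
    have h2 : (2 * (Real.pi:ℂ) * Complex.I) * (t : ℂ)
        = (2 * (Real.pi:ℂ) * Complex.I) * (((2:ℂ) * K + 1) * n) := by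
      linear_combination (2 * (Real.pi:ℂ) * Complex.I) * hn
    have h3 := mul_left_cancel₀ tsrπI_ne_zero h2
    have h4 : (t : ℂ) = (((2 * K + 1 : ℕ) : ℤ) * n : ℤ) := by push_cast; exact h3
    exact_mod_cast h4
  · rintro ⟨n, rfl⟩
    refine ⟨n, ?_⟩
    push_cast
    field_simp

lemma tsrω_int_N (s : ℤ) : tsrω K (((2 * K + 1 : ℕ) : ℤ) * s) = 1 :=
  tsrω_eq_one_iff.mpr ⟨s, rfl⟩

lemma tsrω_pow_N (t : ℤ) : tsrω K t ^ (2 * K + 1) = 1 := by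
  rw [← tsrω_mul_nat]
  rw [show t * ((2 * K + 1 : ℕ) : ℤ) = ((2 * K + 1 : ℕ) : ℤ) * t by ring]
  exact tsrω_int_N t

lemma tsrω_conj (t : ℤ) : (starRingEnd ℂ) (tsrω K t) = tsrω K (-t) := by
  rw [tsrω, tsrω, ← Complex.exp_conj]
  congr 1
  simp only [_root_.map_mul, map_div₀, map_ofNat, Complex.conj_I, Complex.conj_ofReal,
    map_natCast, map_intCast]
  push_cast
  ring

/-- Sum of phases over one period. -/
lemma tsr_sum (K : ℕ) (t : ℤ) :
    ∑ j : Fin (2 * K + 1), tsrω K (t * (j : ℤ))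
      = if ((2 * K + 1 : ℕ) : ℤ) ∣ t then ((2 * K + 1 : ℕ) : ℂ) else 0 := by
  have hconv : ∀ j : Fin (2 * K + 1), tsrω K (t * (j : ℤ)) = tsrω K t ^ (j : ℕ) :=
    fun j => tsrω_mul_nat t j
  split_ifs with h
  · have h1 : tsrω K t = 1 := tsrω_eq_one_iff.mpr h
    simp only [hconv, h1, one_pow, Finset.sum_const, Finset.card_univ, Fintype.card_fin,
      nsmul_eq_mul, mul_one]
  · have hx1 : tsrω K t ≠ 1 := fun hc => h (tsrω_eq_one_iff.mp hc)
    simp only [hconv]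
    rw [Fin.sum_univ_eq_sum_range (fun j => tsrω K t ^ j)]
    rw [geom_sum_eq hx1]
    rw [tsrω_pow_N]
    simp

lemma tsr_fin_dvd_iff (a b : Fin (2 * K + 1)) :
    ((2 * K + 1 : ℕ) : ℤ) ∣ ((a : ℤ) - (b : ℤ)) ↔ a = b := by
  constructor
  · intro h
    have ha := a.is_lt
    have hb := b.is_lt
    have h0 : ((a : ℤ) - (b : ℤ)) = 0 := by
      refine Int.eq_zero_of_abs_lt_dvd h ?_
      rw [abs_lt]
      omega
    exact Fin.ext (by omega)
  · rintro rfl; simp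


section Drep2

lemma tsr_weighted_geom (x : ℂ) (n : ℕ) :
    (x - 1) * ∑ t ∈ Finset.range n, (t : ℂ) * x ^ t
      = ((n : ℂ) - 1) * x ^ n - ∑ t ∈ Finset.range n, x ^ t + 1 := by
  induction n with
  | zero => simp
  | succ n ih =>
    rw [Finset.sum_range_succ, Finset.sum_range_succ (fun t => x ^ t), mul_add, ih]
    push_cast
    ring

lemma tsr_S (K : ℕ) (x : ℂ) (hx1 : x ≠ 1) (hxN : x ^ (2 * K + 1) = 1) :
    ∑ t ∈ Finset.range (2 * K + 1), ((((t : ℤ) - (K : ℤ)) : ℤ) : ℂ) * x ^ t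
      = ((2 * K + 1 : ℕ) : ℂ) / (x - 1) := by
  have hx1' : x - 1 ≠ 0 := sub_ne_zero.mpr hx1
  have hgeom : ∑ t ∈ Finset.range (2 * K + 1), x ^ t = 0 := by
    rw [geom_sum_eq hx1, hxN]; simp
  rw [eq_div_iff hx1']
  have hsplit : ∑ t ∈ Finset.range (2 * K + 1), ((((t : ℤ) - (K : ℤ)) : ℤ) : ℂ) * x ^ t
      = (∑ t ∈ Finset.range (2 * K + 1), (t : ℂ) * x ^ t)
        - (K : ℂ) * ∑ t ∈ Finset.range (2 * K + 1), x ^ t := by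
    rw [Finset.mul_sum, ← Finset.sum_sub_distrib]
    refine Finset.sum_congr rfl fun t _ => ?_
    push_cast
    ring
  rw [hsplit, hgeom]
  have h := tsr_weighted_geom x (2 * K + 1)
  rw [hgeom, hxN] at h
  have : (x - 1) * ((∑ t ∈ Finset.range (2 * K + 1), (t:ℂ) * x ^ t) - (K:ℂ) * 0)
      = ((2 * K + 1 : ℕ) : ℂ) := by
    rw [mul_sub, h]
    push_cast
    ring
  linear_combination this


lemma tsr_scalar_identity (K : ℕ) (u : ℤ) (z : ℂ) (hz : z = Complex.exp ((Real.pi : ℂ) * u / ((2*K+1:ℕ):ℂ) * Complex.I)) (hNu : ¬ ((2*K+1:ℕ):ℤ) ∣ u) :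
    (1/2) * (-1 : ℂ) ^ u / Complex.sin ((Real.pi : ℂ) * (u : ℂ) / ((2*K+1:ℕ):ℂ))
      = Complex.I * tsrω K (-((K:ℤ) * u)) / (tsrω K u - 1) := by
  have hN : ((2*K+1:ℕ):ℂ) ≠ 0 := tsrN_ne_zero
  have hz0 : z ≠ 0 := hz ▸ Complex.exp_ne_zero _
  have hx : tsrω K u = z ^ 2 := by
    rw [hz, tsrω, ← Complex.exp_nat_mul]
    congr 1
    push_cast
    ring
  have hx1 : tsrω K u ≠ 1 := fun hc => hNu (tsrω_eq_one_iff.mp hc)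
  have hz21 : z ^ 2 - 1 ≠ 0 := fun hc => hx1 (by rw [hx, ← sub_eq_zero]; exact hc)
  have hy : tsrω K (-((K:ℤ) * u)) * z ^ (2*K) = 1 := by
    rw [hz, tsrω, ← Complex.exp_nat_mul, ← Complex.exp_add]
    rw [show (2 * Real.pi * Complex.I / ((2*K+1:ℕ):ℂ)) * ((-((K:ℤ)*u) : ℤ) : ℂ)
        + ((2*K : ℕ):ℂ) * ((Real.pi:ℂ) * u / ((2*K+1:ℕ):ℂ) * Complex.I) = 0 by
      push_cast; ring]
    exact Complex.exp_zero
  have hneg : (-1 : ℂ) ^ u = z ^ (2*K+1) := by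
    rw [hz, ← Complex.exp_nat_mul]
    rw [show ((2*K+1 : ℕ):ℂ) * ((Real.pi:ℂ) * u / ((2*K+1:ℕ):ℂ) * Complex.I)
        = (u : ℂ) * (Real.pi * Complex.I) by
      have h2 := tsrN_ne_zero' (K := K)
      push_cast
      field_simp]
    rw [Complex.exp_int_mul, Complex.exp_pi_mul_I]
  have hsq : z ^ (2*K+1) * z ^ (2*K+1) = 1 := by
    rw [← hneg, ← mul_zpow]
    norm_num
  have hsin : Complex.sin ((Real.pi : ℂ) * (u : ℂ) / ((2*K+1:ℕ):ℂ)) = (z⁻¹ - z) * Complex.I / 2 := by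
    rw [Complex.sin, hz, ← Complex.exp_neg]
    ring_nf
  have hzz : z⁻¹ - z = (1 - z^2)/z := by field_simp
  have h1mz : (1 : ℂ) - z^2 ≠ 0 := fun hc => hz21 (by linear_combination -hc)
  rw [hsin, hx, hneg, hzz]
  rw [show tsrω K (-((K:ℤ)*u)) = (z ^ (2*K))⁻¹ by
    field_simp at hy ⊢
    linear_combination hy]
  have hzk : z ^ (2*K) ≠ 0 := pow_ne_zero _ hz0
  field_simp
  ring_nf
  simp only [Complex.I_sq]
  linear_combination (z^2 - 1) * hsq

end Drep2

lemma tsr_sum_centered (K : ℕ) : (∑ t : Fin (2*K+1), ((t:ℤ) - (K:ℤ))) = 0 := by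
  rw [Fin.sum_univ_eq_sum_range (fun i => (i:ℤ) - (K:ℤ))]
  have hnat : (∑ i ∈ Finset.range (2*K+1), i) = (2*K+1)*K := by
    have h := Finset.sum_range_id_mul_two (2*K+1)
    have h2 : (2*K+1) * (2*K+1-1) = ((2*K+1)*K)*2 := by
      simp only [Nat.add_sub_cancel]
      ring
    rw [h2] at h
    exact Nat.eq_of_mul_eq_mul_right (by norm_num) h
  have h2 : ∑ i ∈ Finset.range (2*K+1), ((i:ℤ) - (K:ℤ))
      = ((∑ i ∈ Finset.range (2*K+1), i : ℕ) : ℤ) - (2*K+1)*(K:ℤ) := by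
    rw [Finset.sum_sub_distrib, Finset.sum_const, Finset.card_range]
    push_cast
    ring
  rw [h2, hnat]
  push_cast
  ring

lemma tsr_Drep (K : ℕ) (D : Matrix (Fin (2*K+1)) (Fin (2*K+1)) ℂ)
    (hD : ∀ j k : Fin (2 * K + 1), D j k =
      if j = k then 0 else
        (1 / 2) * (-1 : ℂ) ^ ((j : ℤ) - (k : ℤ))
          / Complex.sin ((Real.pi : ℂ) * (((j : ℤ) - (k : ℤ) : ℤ) : ℂ) / ((2 * K + 1 : ℕ) : ℂ)))
    (j j' : Fin (2*K+1)) :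
    D j j' = (1 / ((2*K+1:ℕ):ℂ)) *
      ∑ t : Fin (2*K+1), Complex.I * ((((t:ℤ) - (K:ℤ)) : ℤ) : ℂ)
        * tsrω K (((t:ℤ) - (K:ℤ)) * ((j:ℤ) - (j':ℤ))) := by
  have hN : ((2*K+1:ℕ):ℂ) ≠ 0 := tsrN_ne_zero
  rcases eq_or_ne j j' with rfl | hne
  · rw [hD, if_pos rfl]
    have hS : ∑ t : Fin (2*K+1), Complex.I * ((((t:ℤ) - (K:ℤ)) : ℤ) : ℂ)
        * tsrω K (((t:ℤ) - (K:ℤ)) * ((j:ℤ) - (j:ℤ))) = 0 := by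
      have harg : ∀ t : Fin (2*K+1), ((t:ℤ) - (K:ℤ)) * ((j:ℤ) - (j:ℤ)) = 0 :=
        fun t => by ring
      simp only [harg, tsrω_zero, mul_one, ← Finset.mul_sum]
      rw [show (∑ t : Fin (2*K+1), ((((t:ℤ) - (K:ℤ)) : ℤ) : ℂ))
          = (((∑ t : Fin (2*K+1), ((t:ℤ) - (K:ℤ))) : ℤ) : ℂ) by push_cast; ring]
      rw [tsr_sum_centered]
      simp
    rw [hS, mul_zero]
  · have hNu : ¬ ((2*K+1:ℕ):ℤ) ∣ ((j:ℤ) - (j':ℤ)) :=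
      fun hdvd => hne ((tsr_fin_dvd_iff j j').mp hdvd)
    have hx1 : tsrω K ((j:ℤ) - (j':ℤ)) ≠ 1 := fun hc => hNu (tsrω_eq_one_iff.mp hc)
    have hxN : tsrω K ((j:ℤ) - (j':ℤ)) ^ (2*K+1) = 1 := tsrω_pow_N _
    have hkey := tsr_scalar_identity K ((j:ℤ) - (j':ℤ)) _ rfl hNu
    rw [hD, if_neg hne, hkey]
    have hterm : ∀ t : Fin (2*K+1),
        Complex.I * ((((t:ℤ) - (K:ℤ)) : ℤ) : ℂ)
            * tsrω K (((t:ℤ) - (K:ℤ)) * ((j:ℤ) - (j':ℤ)))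
          = (Complex.I * tsrω K (-((K:ℤ) * ((j:ℤ) - (j':ℤ)))))
            * (((((t:ℤ) - (K:ℤ)) : ℤ) : ℂ) * (tsrω K ((j:ℤ) - (j':ℤ))) ^ ((t : ℕ))) := by
      intro t
      rw [show ((t:ℤ) - (K:ℤ)) * ((j:ℤ) - (j':ℤ))
          = (-((K:ℤ) * ((j:ℤ) - (j':ℤ)))) + ((j:ℤ) - (j':ℤ)) * ((t : ℕ) : ℤ) by
        push_cast; ring]
      rw [tsrω_add, tsrω_mul_nat]
      ring
    rw [Finset.sum_congr rfl (fun t _ => hterm t), ← Finset.mul_sum]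
    rw [Fin.sum_univ_eq_sum_range
      (fun t : ℕ => ((((t:ℤ) - (K:ℤ)) : ℤ) : ℂ) * (tsrω K ((j:ℤ) - (j':ℤ))) ^ t)]
    have hx1' : tsrω K ((j:ℤ) - (j':ℤ)) - 1 ≠ 0 := sub_ne_zero.mpr hx1
    have hS : (∑ t ∈ Finset.range (2*K+1),
        ((((t:ℤ) - (K:ℤ)) : ℤ) : ℂ) * (tsrω K ((j:ℤ) - (j':ℤ))) ^ t)
          * (tsrω K ((j:ℤ) - (j':ℤ)) - 1) = ((2*K+1:ℕ):ℂ) := by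
      rw [tsr_S K _ hx1 hxN]
      exact div_mul_cancel₀ _ hx1'
    apply mul_left_cancel₀ hN
    rw [← mul_assoc, mul_one_div_cancel hN, one_mul, mul_div_assoc']
    rw [div_eq_iff hx1']
    linear_combination (-(Complex.I * tsrω K (-((K:ℤ) * ((j:ℤ) - (j':ℤ)))))) * hS


lemma tsr_sum_shift (K : ℕ) (a u : ℤ) :
    ∑ x : Fin (2*K+1), tsrω K (a + u * (x:ℤ))
      = tsrω K a * (if ((2*K+1:ℕ):ℤ) ∣ u then ((2*K+1:ℕ):ℂ) else 0) := by
  simp only [tsrω_add, ← Finset.mul_sum, tsr_sum]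

lemma tsr_sum_dvd_delta (K : ℕ) (k : Fin (2*K+1)) (g : Fin (2*K+1) → ℂ) :
    (∑ t : Fin (2*K+1), g t * (if ((2*K+1:ℕ):ℤ) ∣ ((t:ℤ) - (k:ℤ)) then ((2*K+1:ℕ):ℂ) else 0))
      = g k * ((2*K+1:ℕ):ℂ) := by
  rw [Finset.sum_eq_single k]
  · rw [if_pos (by simp)]
  · intro b _ hbk
    rw [if_neg (fun h => hbk ((tsr_fin_dvd_iff b k).mp h)), mul_zero]
  · intro h; exact absurd (Finset.mem_univ k) h

/-- The (unitary) DFT-type matrix mapping collocation values to harmonic coefficients. -/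
def tsrF (K : ℕ) : Matrix (Fin (2*K+1)) (Fin (2*K+1)) ℂ :=
  Matrix.of fun k j =>
    ((Real.sqrt ((2*K+1:ℕ):ℝ) : ℝ) : ℂ)⁻¹ * tsrω K (-(((k:ℤ) - (K:ℤ)) * (j:ℤ)))

lemma tsrF_apply (K : ℕ) (k j : Fin (2*K+1)) :
    tsrF K k j = ((Real.sqrt ((2*K+1:ℕ):ℝ) : ℝ) : ℂ)⁻¹ * tsrω K (-(((k:ℤ) - (K:ℤ)) * (j:ℤ))) :=
  rfl

lemma tsrc_mul_self (K : ℕ) :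
    ((Real.sqrt ((2*K+1:ℕ):ℝ) : ℝ) : ℂ)⁻¹ * ((Real.sqrt ((2*K+1:ℕ):ℝ) : ℝ) : ℂ)⁻¹
      = 1 / ((2*K+1:ℕ):ℂ) := by
  rw [← mul_inv, ← Complex.ofReal_mul, Real.mul_self_sqrt (by positivity), one_div,
    Complex.ofReal_natCast]

lemma tsrc_conj (K : ℕ) :
    (starRingEnd ℂ) ((Real.sqrt ((2*K+1:ℕ):ℝ) : ℝ) : ℂ)⁻¹
      = ((Real.sqrt ((2*K+1:ℕ):ℝ) : ℝ) : ℂ)⁻¹ := by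
  rw [map_inv₀, Complex.conj_ofReal]

lemma tsrF_conj (K : ℕ) (k j : Fin (2*K+1)) :
    star (tsrF K k j)
      = ((Real.sqrt ((2*K+1:ℕ):ℝ) : ℝ) : ℂ)⁻¹ * tsrω K (((k:ℤ) - (K:ℤ)) * (j:ℤ)) := by
  rw [show star (tsrF K k j) = (starRingEnd ℂ) (tsrF K k j) from rfl]
  rw [tsrF_apply, _root_.map_mul, tsrc_conj, tsrω_conj, neg_neg]

lemma tsrF_mul_conjTranspose (K : ℕ) : tsrF K * (tsrF K)ᴴ = 1 := by
  ext k l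
  rw [Matrix.mul_apply]
  have hterm : ∀ j : Fin (2*K+1),
      tsrF K k j * (tsrF K)ᴴ j l
        = (((Real.sqrt ((2*K+1:ℕ):ℝ) : ℝ) : ℂ)⁻¹ * ((Real.sqrt ((2*K+1:ℕ):ℝ) : ℝ) : ℂ)⁻¹)
          * tsrω K (0 + ((l:ℤ) - (k:ℤ)) * (j:ℤ)) := by
    intro j
    rw [Matrix.conjTranspose_apply, tsrF_conj, tsrF_apply]
    rw [show (0 : ℤ) + ((l:ℤ) - (k:ℤ)) * (j:ℤ)
        = (-(((k:ℤ) - (K:ℤ)) * (j:ℤ))) + (((l:ℤ) - (K:ℤ)) * (j:ℤ)) by ring]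
    rw [tsrω_add]
    ring
  rw [Finset.sum_congr rfl (fun j _ => hterm j), ← Finset.mul_sum, tsr_sum_shift,
    tsrc_mul_self, tsrω_zero, one_mul]
  by_cases h : k = l
  · subst h
    rw [if_pos (by simp), Matrix.one_apply_eq, one_div, inv_mul_cancel₀ tsrN_ne_zero]
  · rw [if_neg (fun hd => h ((tsr_fin_dvd_iff l k).mp hd).symm), Matrix.one_apply_ne h, mul_zero]

lemma tsrF_conjTranspose_mul (K : ℕ) : (tsrF K)ᴴ * tsrF K = 1 := by
  ext j j'
  rw [Matrix.mul_apply]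
  have hterm : ∀ t : Fin (2*K+1),
      (tsrF K)ᴴ j t * tsrF K t j'
        = (((Real.sqrt ((2*K+1:ℕ):ℝ) : ℝ) : ℂ)⁻¹ * ((Real.sqrt ((2*K+1:ℕ):ℝ) : ℝ) : ℂ)⁻¹)
          * tsrω K ((-((K:ℤ) * ((j:ℤ) - (j':ℤ)))) + ((j:ℤ) - (j':ℤ)) * (t:ℤ)) := by
    intro t
    rw [Matrix.conjTranspose_apply, tsrF_conj, tsrF_apply]
    rw [show (-((K:ℤ) * ((j:ℤ) - (j':ℤ)))) + ((j:ℤ) - (j':ℤ)) * (t:ℤ)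
        = (((t:ℤ) - (K:ℤ)) * (j:ℤ)) + (-(((t:ℤ) - (K:ℤ)) * ((j':ℤ)))) by ring]
    rw [tsrω_add]
    ring
  rw [Finset.sum_congr rfl (fun t _ => hterm t), ← Finset.mul_sum, tsr_sum_shift,
    tsrc_mul_self]
  by_cases h : j = j'
  · subst h
    rw [if_pos (by simp), Matrix.one_apply_eq]
    rw [show -((K:ℤ) * ((j:ℤ) - (j:ℤ))) = 0 by ring, tsrω_zero, one_mul, one_div,
      inv_mul_cancel₀ tsrN_ne_zero]
  · rw [if_neg (fun hd => h ((tsr_fin_dvd_iff j j').mp hd)), Matrix.one_apply_ne h]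
    rw [mul_zero, mul_zero]

lemma tsr_ite_prod_sum {d : ℕ} (a b : Fin d) (X Y : ℂ) :
    ∑ c : Fin d, (X * (if a = c then 1 else 0)) * star (Y * (if b = c then 1 else 0))
      = (X * star Y) * (if a = b then 1 else 0) := by
  by_cases hab : a = b
  · subst hab
    rw [if_pos rfl, mul_one, Finset.sum_eq_single a]
    · simp
    · intro c _ hca
      rw [if_neg (fun h => hca h.symm), mul_zero, zero_mul]
    · intro h; exact absurd (Finset.mem_univ a) h
  · rw [if_neg hab, mul_zero]
    apply Finset.sum_eq_zero
    intro c _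
    by_cases h1 : a = c
    · have h2 : ¬ b = c := fun h => hab (h1.trans h.symm)
      rw [if_neg h2, mul_zero, star_zero, mul_zero]
    · rw [if_neg h1, mul_zero, zero_mul]

lemma tsr_ite_prod_sum' {d : ℕ} (a b : Fin d) (X Y : ℂ) :
    ∑ c : Fin d, star (X * (if c = a then 1 else 0)) * (Y * (if c = b then 1 else 0))
      = (star X * Y) * (if a = b then 1 else 0) := by
  by_cases hab : a = b
  · subst hab
    rw [if_pos rfl, mul_one, Finset.sum_eq_single a]
    · simp
    · intro c _ hca
      rw [if_neg hca, mul_zero, star_zero, zero_mul]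
    · intro h; exact absurd (Finset.mem_univ a) h
  · rw [if_neg hab, mul_zero]
    apply Finset.sum_eq_zero
    intro c _
    by_cases h1 : c = a
    · have h2 : ¬ c = b := fun h => hab (h1.symm.trans h)
      rw [if_neg h2, mul_zero, mul_zero]
    · rw [if_neg h1, mul_zero, star_zero, zero_mul]

/-- Block (Kronecker) extension of `tsrF` acting identically on each of `d` components. -/

def tsrKron (K d : ℕ) : Matrix (Fin (2*K+1) × Fin d) (Fin (2*K+1) × Fin d) ℂ :=
  Matrix.of fun p q => tsrF K p.1 q.1 * (if p.2 = q.2 then 1 else 0)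

lemma tsrKron_apply (K d : ℕ) (p q : Fin (2*K+1) × Fin d) :
    tsrKron K d p q = tsrF K p.1 q.1 * (if p.2 = q.2 then 1 else 0) := rfl

lemma tsrKron_mul_conjTranspose (K d : ℕ) : tsrKron K d * (tsrKron K d)ᴴ = 1 := by
  ext ⟨k, a⟩ ⟨l, b⟩
  rw [Matrix.mul_apply, Fintype.sum_prod_type]
  have hF := congrFun (congrFun (tsrF_mul_conjTranspose K) k) l
  rw [Matrix.mul_apply] at hF
  have hcol : ∀ (j : Fin (2*K+1)),
      ∑ c : Fin d, tsrKron K d (k, a) (j, c) * (tsrKron K d)ᴴ (j, c) (l, b)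
        = (tsrF K k j * star (tsrF K l j)) * (if a = b then 1 else 0) := by
    intro j
    have hc : ∀ c : Fin d, tsrKron K d (k, a) (j, c) * (tsrKron K d)ᴴ (j, c) (l, b)
        = (tsrF K k j * (if a = c then 1 else 0)) * star (tsrF K l j * (if b = c then 1 else 0)) := by
      intro c
      rw [Matrix.conjTranspose_apply, tsrKron_apply, tsrKron_apply]
    rw [Finset.sum_congr rfl (fun c _ => hc c), tsr_ite_prod_sum]
  rw [Finset.sum_congr rfl (fun j _ => hcol j), ← Finset.sum_mul]
  simp only [Matrix.conjTranspose_apply] at hF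
  rw [hF]
  by_cases hkl : k = l <;> by_cases hab : a = b <;>
    simp [Matrix.one_apply, hkl, hab, Prod.ext_iff]

lemma tsrKron_conjTranspose_mul (K d : ℕ) : (tsrKron K d)ᴴ * tsrKron K d = 1 := by
  ext ⟨k, a⟩ ⟨l, b⟩
  rw [Matrix.mul_apply, Fintype.sum_prod_type]
  have hF := congrFun (congrFun (tsrF_conjTranspose_mul K) k) l
  rw [Matrix.mul_apply] at hF
  have hcol : ∀ (j : Fin (2*K+1)),
      ∑ c : Fin d, (tsrKron K d)ᴴ (k, a) (j, c) * tsrKron K d (j, c) (l, b)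
        = (star (tsrF K j k) * tsrF K j l) * (if a = b then 1 else 0) := by
    intro j
    have hc : ∀ c : Fin d, (tsrKron K d)ᴴ (k, a) (j, c) * tsrKron K d (j, c) (l, b)
        = star (tsrF K j k * (if c = a then 1 else 0)) * (tsrF K j l * (if c = b then 1 else 0)) := by
      intro c
      rw [Matrix.conjTranspose_apply, tsrKron_apply, tsrKron_apply]
    rw [Finset.sum_congr rfl (fun c _ => hc c), tsr_ite_prod_sum']
  rw [Finset.sum_congr rfl (fun j _ => hcol j), ← Finset.sum_mul]
  simp only [Matrix.conjTranspose_apply] at hF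
  rw [hF]
  by_cases hkl : k = l <;> by_cases hab : a = b <;>
    simp [Matrix.one_apply, hkl, hab, Prod.ext_iff]


lemma tsr_FD (K : ℕ) (D : Matrix (Fin (2*K+1)) (Fin (2*K+1)) ℂ)
    (hD : ∀ j k : Fin (2 * K + 1), D j k =
      if j = k then 0 else
        (1 / 2) * (-1 : ℂ) ^ ((j : ℤ) - (k : ℤ))
          / Complex.sin ((Real.pi : ℂ) * (((j : ℤ) - (k : ℤ) : ℤ) : ℂ) / ((2 * K + 1 : ℕ) : ℂ))) :
    tsrF K * D
      = Matrix.of (fun k j : Fin (2*K+1) => Complex.I * ((((k:ℤ) - (K:ℤ)) : ℤ) : ℂ) * tsrF K k j) := by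
  have hN : ((2*K+1:ℕ):ℂ) ≠ 0 := tsrN_ne_zero
  ext k j
  rw [Matrix.mul_apply, Matrix.of_apply]
  have hstep1 : ∀ j' : Fin (2*K+1), tsrF K k j' * D j' j
      = ∑ t : Fin (2*K+1),
          ((1/((2*K+1:ℕ):ℂ)) * Complex.I * ((((t:ℤ)-(K:ℤ)):ℤ):ℂ)
            * ((Real.sqrt ((2*K+1:ℕ):ℝ) : ℝ) : ℂ)⁻¹ * tsrω K (-(((t:ℤ)-(K:ℤ)) * (j:ℤ))))
          * tsrω K (((t:ℤ)-(k:ℤ)) * (j':ℤ)) := by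
    intro j'
    rw [tsr_Drep K D hD j' j]
    rw [show tsrF K k j' * ((1/((2*K+1:ℕ):ℂ)) * ∑ t : Fin (2*K+1),
          Complex.I * ((((t:ℤ) - (K:ℤ)) : ℤ) : ℂ)
            * tsrω K (((t:ℤ) - (K:ℤ)) * ((j':ℤ) - (j:ℤ))))
        = ∑ t : Fin (2*K+1), tsrF K k j' * ((1/((2*K+1:ℕ):ℂ))
            * (Complex.I * ((((t:ℤ) - (K:ℤ)) : ℤ) : ℂ)
              * tsrω K (((t:ℤ) - (K:ℤ)) * ((j':ℤ) - (j:ℤ))))) from by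
      rw [← Finset.mul_sum, ← Finset.mul_sum]]
    refine Finset.sum_congr rfl fun t _ => ?_
    have e1 : (-(((k:ℤ)-(K:ℤ)) * (j':ℤ))) + (((t:ℤ)-(K:ℤ)) * ((j':ℤ)-(j:ℤ)))
        = (-(((t:ℤ)-(K:ℤ)) * (j:ℤ))) + (((t:ℤ)-(k:ℤ)) * (j':ℤ)) := by ring
    calc tsrF K k j' * ((1/((2*K+1:ℕ):ℂ))
            * (Complex.I * ((((t:ℤ) - (K:ℤ)) : ℤ) : ℂ)
              * tsrω K (((t:ℤ) - (K:ℤ)) * ((j':ℤ) - (j:ℤ)))))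
        = ((1/((2*K+1:ℕ):ℂ)) * Complex.I * ((((t:ℤ)-(K:ℤ)):ℤ):ℂ)
            * ((Real.sqrt ((2*K+1:ℕ):ℝ) : ℝ) : ℂ)⁻¹)
          * (tsrω K (-(((k:ℤ)-(K:ℤ)) * (j':ℤ)))
            * tsrω K (((t:ℤ)-(K:ℤ)) * ((j':ℤ)-(j:ℤ)))) := by
          rw [tsrF_apply]; ring
      _ = ((1/((2*K+1:ℕ):ℂ)) * Complex.I * ((((t:ℤ)-(K:ℤ)):ℤ):ℂ)
            * ((Real.sqrt ((2*K+1:ℕ):ℝ) : ℝ) : ℂ)⁻¹)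
          * tsrω K ((-(((k:ℤ)-(K:ℤ)) * (j':ℤ))) + (((t:ℤ)-(K:ℤ)) * ((j':ℤ)-(j:ℤ)))) := by
          rw [tsrω_add]
      _ = ((1/((2*K+1:ℕ):ℂ)) * Complex.I * ((((t:ℤ)-(K:ℤ)):ℤ):ℂ)
            * ((Real.sqrt ((2*K+1:ℕ):ℝ) : ℝ) : ℂ)⁻¹)
          * tsrω K ((-(((t:ℤ)-(K:ℤ)) * (j:ℤ))) + (((t:ℤ)-(k:ℤ)) * (j':ℤ))) := by
          rw [e1]
      _ = ((1/((2*K+1:ℕ):ℂ)) * Complex.I * ((((t:ℤ)-(K:ℤ)):ℤ):ℂ)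
            * ((Real.sqrt ((2*K+1:ℕ):ℝ) : ℝ) : ℂ)⁻¹ * tsrω K (-(((t:ℤ)-(K:ℤ)) * (j:ℤ))))
          * tsrω K (((t:ℤ)-(k:ℤ)) * (j':ℤ)) := by
          rw [tsrω_add]; ring
  rw [Finset.sum_congr rfl (fun j' _ => hstep1 j'), Finset.sum_comm]
  have hstep2 : ∀ t : Fin (2*K+1),
      ∑ j' : Fin (2*K+1),
        ((1/((2*K+1:ℕ):ℂ)) * Complex.I * ((((t:ℤ)-(K:ℤ)):ℤ):ℂ)
            * ((Real.sqrt ((2*K+1:ℕ):ℝ) : ℝ) : ℂ)⁻¹ * tsrω K (-(((t:ℤ)-(K:ℤ)) * (j:ℤ))))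
          * tsrω K (((t:ℤ)-(k:ℤ)) * (j':ℤ))
      = ((1/((2*K+1:ℕ):ℂ)) * Complex.I * ((((t:ℤ)-(K:ℤ)):ℤ):ℂ)
            * ((Real.sqrt ((2*K+1:ℕ):ℝ) : ℝ) : ℂ)⁻¹ * tsrω K (-(((t:ℤ)-(K:ℤ)) * (j:ℤ))))
          * (if ((2*K+1:ℕ):ℤ) ∣ ((t:ℤ) - (k:ℤ)) then ((2*K+1:ℕ):ℂ) else 0) := by
    intro t
    rw [← Finset.mul_sum, tsr_sum]
  rw [Finset.sum_congr rfl (fun t _ => hstep2 t), tsr_sum_dvd_delta]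
  rw [tsrF_apply]
  have hcancel : (1:ℂ)/((2*K+1:ℕ):ℂ) * ((2*K+1:ℕ):ℂ) = 1 := one_div_mul_cancel hN
  calc (1/((2*K+1:ℕ):ℂ) * Complex.I * ((((k:ℤ)-(K:ℤ)):ℤ):ℂ)
          * ((Real.sqrt ((2*K+1:ℕ):ℝ) : ℝ) : ℂ)⁻¹ * tsrω K (-(((k:ℤ)-(K:ℤ)) * (j:ℤ))))
        * ((2*K+1:ℕ):ℂ)
      = ((1:ℂ)/((2*K+1:ℕ):ℂ) * ((2*K+1:ℕ):ℂ))
        * (Complex.I * ((((k:ℤ)-(K:ℤ)):ℤ):ℂ)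
          * ((Real.sqrt ((2*K+1:ℕ):ℝ) : ℝ) : ℂ)⁻¹ * tsrω K (-(((k:ℤ)-(K:ℤ)) * (j:ℤ)))) := by
        ring
    _ = Complex.I * ((((k:ℤ)-(K:ℤ)):ℤ):ℂ)
        * (((Real.sqrt ((2*K+1:ℕ):ℝ) : ℝ) : ℂ)⁻¹ * tsrω K (-(((k:ℤ)-(K:ℤ)) * (j:ℤ)))) := by
        rw [hcancel]; ring


lemma tsr_JF (K d' : ℕ) (J : Fin (2*K+1) → Matrix (Fin d') (Fin d') ℂ)
    (Jhat : ℤ → Matrix (Fin d') (Fin d') ℂ)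
    (hJhat : ∀ k : ℤ, Jhat k = (1 / ((2 * K + 1 : ℕ) : ℂ)) •
      ∑ j : Fin (2 * K + 1),
        Complex.exp (-Complex.I * (k : ℂ)
          * ((2 * Real.pi * (j : ℕ) / (2 * K + 1 : ℕ) : ℝ) : ℂ)) • J j)
    (k j : Fin (2*K+1)) (a c : Fin d') :
    ∑ l : Fin (2*K+1), Jhat ((((k:ℤ) - (K:ℤ))) - (((l:ℤ) - (K:ℤ)))) a c * tsrF K l j
      = J j a c * tsrF K k j := by
  have hN : ((2*K+1:ℕ):ℂ) ≠ 0 := tsrN_ne_zero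
  have hJhat' : ∀ s : ℤ, Jhat s a c
      = (1/((2*K+1:ℕ):ℂ)) * ∑ j' : Fin (2*K+1), tsrω K (-(s * (j':ℤ))) * J j' a c := by
    intro s
    rw [hJhat s, Matrix.smul_apply, Matrix.sum_apply, smul_eq_mul]
    congr 1
    refine Finset.sum_congr rfl fun j' _ => ?_
    rw [Matrix.smul_apply, smul_eq_mul]
    congr 1
    rw [tsrω]
    congr 1
    push_cast
    ring
  have hterm : ∀ l : Fin (2*K+1),
      Jhat ((((k:ℤ) - (K:ℤ))) - (((l:ℤ) - (K:ℤ)))) a c * tsrF K l j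
        = ∑ j' : Fin (2*K+1),
            ((1/((2*K+1:ℕ):ℂ)) * J j' a c * ((Real.sqrt ((2*K+1:ℕ):ℝ) : ℝ) : ℂ)⁻¹
              * tsrω K ((-(((k:ℤ)-(K:ℤ)) * (j':ℤ))) - (K:ℤ)*((j':ℤ)-(j:ℤ))))
            * tsrω K (((j':ℤ)-(j:ℤ)) * (l:ℤ)) := by
    intro l
    rw [hJhat' _]
    rw [show ((1/((2*K+1:ℕ):ℂ)) * ∑ j' : Fin (2*K+1),
          tsrω K (-(((((k:ℤ) - (K:ℤ))) - (((l:ℤ) - (K:ℤ)))) * (j':ℤ))) * J j' a c)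
            * tsrF K l j
        = ∑ j' : Fin (2*K+1), (1/((2*K+1:ℕ):ℂ))
            * (tsrω K (-(((((k:ℤ) - (K:ℤ))) - (((l:ℤ) - (K:ℤ)))) * (j':ℤ))) * J j' a c)
            * tsrF K l j from by rw [Finset.mul_sum, Finset.sum_mul]]
    refine Finset.sum_congr rfl fun j' _ => ?_
    have e1 : (-(((((k:ℤ) - (K:ℤ))) - (((l:ℤ) - (K:ℤ)))) * (j':ℤ)))
          + (-(((l:ℤ) - (K:ℤ)) * (j:ℤ)))
        = ((-(((k:ℤ)-(K:ℤ)) * (j':ℤ))) - (K:ℤ)*((j':ℤ)-(j:ℤ)))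
          + (((j':ℤ)-(j:ℤ)) * (l:ℤ)) := by ring
    calc (1/((2*K+1:ℕ):ℂ))
            * (tsrω K (-(((((k:ℤ) - (K:ℤ))) - (((l:ℤ) - (K:ℤ)))) * (j':ℤ))) * J j' a c)
            * tsrF K l j
        = ((1/((2*K+1:ℕ):ℂ)) * J j' a c * ((Real.sqrt ((2*K+1:ℕ):ℝ) : ℝ) : ℂ)⁻¹)
          * (tsrω K (-(((((k:ℤ) - (K:ℤ))) - (((l:ℤ) - (K:ℤ)))) * (j':ℤ)))
            * tsrω K (-(((l:ℤ) - (K:ℤ)) * (j:ℤ)))) := by rw [tsrF_apply]; ring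
      _ = ((1/((2*K+1:ℕ):ℂ)) * J j' a c * ((Real.sqrt ((2*K+1:ℕ):ℝ) : ℝ) : ℂ)⁻¹)
          * tsrω K ((-(((((k:ℤ) - (K:ℤ))) - (((l:ℤ) - (K:ℤ)))) * (j':ℤ)))
            + (-(((l:ℤ) - (K:ℤ)) * (j:ℤ)))) := by rw [tsrω_add]
      _ = ((1/((2*K+1:ℕ):ℂ)) * J j' a c * ((Real.sqrt ((2*K+1:ℕ):ℝ) : ℝ) : ℂ)⁻¹)
          * tsrω K (((-(((k:ℤ)-(K:ℤ)) * (j':ℤ))) - (K:ℤ)*((j':ℤ)-(j:ℤ)))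
            + (((j':ℤ)-(j:ℤ)) * (l:ℤ))) := by rw [e1]
      _ = ((1/((2*K+1:ℕ):ℂ)) * J j' a c * ((Real.sqrt ((2*K+1:ℕ):ℝ) : ℝ) : ℂ)⁻¹
              * tsrω K ((-(((k:ℤ)-(K:ℤ)) * (j':ℤ))) - (K:ℤ)*((j':ℤ)-(j:ℤ))))
            * tsrω K (((j':ℤ)-(j:ℤ)) * (l:ℤ)) := by rw [tsrω_add]; ring
  rw [Finset.sum_congr rfl (fun l _ => hterm l), Finset.sum_comm]
  have hstep2 : ∀ j' : Fin (2*K+1),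
      ∑ l : Fin (2*K+1),
          ((1/((2*K+1:ℕ):ℂ)) * J j' a c * ((Real.sqrt ((2*K+1:ℕ):ℝ) : ℝ) : ℂ)⁻¹
              * tsrω K ((-(((k:ℤ)-(K:ℤ)) * (j':ℤ))) - (K:ℤ)*((j':ℤ)-(j:ℤ))))
            * tsrω K (((j':ℤ)-(j:ℤ)) * (l:ℤ))
        = ((1/((2*K+1:ℕ):ℂ)) * J j' a c * ((Real.sqrt ((2*K+1:ℕ):ℝ) : ℝ) : ℂ)⁻¹
              * tsrω K ((-(((k:ℤ)-(K:ℤ)) * (j':ℤ))) - (K:ℤ)*((j':ℤ)-(j:ℤ))))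
            * (if ((2*K+1:ℕ):ℤ) ∣ ((j':ℤ) - (j:ℤ)) then ((2*K+1:ℕ):ℂ) else 0) := by
    intro j'
    rw [← Finset.mul_sum, tsr_sum]
  rw [Finset.sum_congr rfl (fun j' _ => hstep2 j'), tsr_sum_dvd_delta]
  rw [show ((-(((k:ℤ)-(K:ℤ)) * (j:ℤ))) - (K:ℤ)*((j:ℤ)-(j:ℤ))) = -(((k:ℤ)-(K:ℤ)) * (j:ℤ))
    by ring]
  rw [tsrF_apply]
  have hcancel : (1:ℂ)/((2*K+1:ℕ):ℂ) * ((2*K+1:ℕ):ℂ) = 1 := one_div_mul_cancel hN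
  calc ((1/((2*K+1:ℕ):ℂ)) * J j a c * ((Real.sqrt ((2*K+1:ℕ):ℝ) : ℝ) : ℂ)⁻¹
          * tsrω K (-(((k:ℤ)-(K:ℤ)) * (j:ℤ)))) * ((2*K+1:ℕ):ℂ)
      = ((1:ℂ)/((2*K+1:ℕ):ℂ) * ((2*K+1:ℕ):ℂ))
        * (J j a c * (((Real.sqrt ((2*K+1:ℕ):ℝ) : ℝ) : ℂ)⁻¹
          * tsrω K (-(((k:ℤ)-(K:ℤ)) * (j:ℤ))))) := by ring
    _ = J j a c * (((Real.sqrt ((2*K+1:ℕ):ℝ) : ℝ) : ℂ)⁻¹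
          * tsrω K (-(((k:ℤ)-(K:ℤ)) * (j:ℤ)))) := by rw [hcancel, one_mul]

open scoped Matrix.Norms.L2Operator in
lemma tsr_opnorm_conj {n₁ n₂ : Type*} [Fintype n₁] [Fintype n₂] [DecidableEq n₁] [DecidableEq n₂]
    (U : Matrix n₁ n₁ ℂ) (V : Matrix n₂ n₂ ℂ) (X : Matrix n₁ n₂ ℂ)
    (hU : Uᴴ * U = 1) (hV : Vᴴ * V = 1) (hV' : V * Vᴴ = 1) :
    ‖U * X * Vᴴ‖ = ‖X‖ := by
  have hVu : V ∈ unitary (Matrix n₂ n₂ ℂ) := Unitary.mem_iff.mpr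
    ⟨by rw [Matrix.star_eq_conjTranspose, hV], by rw [Matrix.star_eq_conjTranspose, hV']⟩
  have hconj : (U * X * Vᴴ)ᴴ * (U * X * Vᴴ) = V * ((Xᴴ * X) * Vᴴ) := by
    calc (U * X * Vᴴ)ᴴ * (U * X * Vᴴ)
        = (Vᴴᴴ * (Xᴴ * Uᴴ)) * (U * X * Vᴴ) := by
          rw [Matrix.conjTranspose_mul (U * X) Vᴴ, Matrix.conjTranspose_mul U X]
      _ = V * (Xᴴ * ((Uᴴ * U) * (X * Vᴴ))) := by
          rw [Matrix.conjTranspose_conjTranspose]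
          simp only [Matrix.mul_assoc]
      _ = V * ((Xᴴ * X) * Vᴴ) := by
          rw [hU, Matrix.one_mul]
          simp only [Matrix.mul_assoc]
  have h1 : ‖U * X * Vᴴ‖ * ‖U * X * Vᴴ‖ = ‖X‖ * ‖X‖ := by
    rw [← Matrix.l2_opNorm_conjTranspose_mul_self (U * X * Vᴴ), hconj]
    rw [CStarRing.norm_mem_unitary_mul _ hVu]
    rw [← Matrix.star_eq_conjTranspose V, CStarRing.norm_mul_mem_unitary _ (Unitary.star_mem hVu)]
    exact Matrix.l2_opNorm_conjTranspose_mul_self X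
  exact (mul_self_inj (norm_nonneg _) (norm_nonneg _)).mp h1

end TSRaux

/-- The operator norm of a complex matrix induced by the Euclidean (`ℓ²`) vector norms.
This equals the largest singular value `σ₁`. -/
noncomputable def opNorm {a b : Type*} [Fintype a] [Fintype b] [DecidableEq b]
    (A : Matrix a b ℂ) : ℝ :=
  ‖LinearMap.toContinuousLinearMap (Matrix.toEuclideanLin A)‖

open scoped Matrix.Norms.L2Operator in
lemma opNorm_eq_l2 {a b : Type*} [Fintype a] [Fintype b] [DecidableEq b]
    (A : Matrix a b ℂ) : opNorm A = ‖A‖ := rfl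

/-- **Equivalence of the time-spectral and harmonic resolvent operators.**
With `N = 2K+1` collocation points `θ_j = 2πj/N`, the Fourier spectral differentiation
matrix `D`, the time-spectral operator `L_TS = blkdiag(iω_f I - J_j) + ω₀ (D ⊗ I_d)` with
`B_TS = blkdiag(B,…,B)`, and the harmonic operator `L_HR` built from the DFT coefficients
`Ĵ_k = (1/N) Σ_j J_j e^{-i k θ_j}` with `B_HR = blkdiag(B,…,B)`:
`L_TS` is invertible iff `L_HR` is, and then `σ₁(L_TS⁻¹ B_TS) = σ₁(L_HR⁻¹ B_HR)`. -/
theorem tsr_hr_equivalence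
    (K d m : ℕ) (ω₀ ωf : ℝ) (hω₀ : 0 < ω₀)
    (J : Fin (2 * K + 1) → Matrix (Fin d) (Fin d) ℂ) (B : Matrix (Fin d) (Fin m) ℂ)
    (D : Matrix (Fin (2 * K + 1)) (Fin (2 * K + 1)) ℂ)
    (hD : ∀ j k : Fin (2 * K + 1), D j k =
      if j = k then 0 else
        (1 / 2) * (-1 : ℂ) ^ ((j : ℤ) - (k : ℤ))
          / Complex.sin ((Real.pi : ℂ) * (((j : ℤ) - (k : ℤ) : ℤ) : ℂ) / ((2 * K + 1 : ℕ) : ℂ)))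
    (LTS : Matrix (Fin (2 * K + 1) × Fin d) (Fin (2 * K + 1) × Fin d) ℂ)
    (hLTS : ∀ p q : Fin (2 * K + 1) × Fin d, LTS p q =
      (if p.1 = q.1 then
        (if p.2 = q.2 then Complex.I * (ωf : ℂ) else 0) - J p.1 p.2 q.2
       else 0)
      + (ω₀ : ℂ) * D p.1 q.1 * (if p.2 = q.2 then 1 else 0))
    (BTS : Matrix (Fin (2 * K + 1) × Fin d) (Fin (2 * K + 1) × Fin m) ℂ)
    (hBTS : ∀ p q, BTS p q = if p.1 = q.1 then B p.2 q.2 else 0)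
    (Jhat : ℤ → Matrix (Fin d) (Fin d) ℂ)
    (hJhat : ∀ k : ℤ, Jhat k = (1 / ((2 * K + 1 : ℕ) : ℂ)) •
      ∑ j : Fin (2 * K + 1),
        Complex.exp (-Complex.I * (k : ℂ)
          * ((2 * Real.pi * (j : ℕ) / (2 * K + 1 : ℕ) : ℝ) : ℂ)) • J j)
    (LHR : Matrix (Fin (2 * K + 1) × Fin d) (Fin (2 * K + 1) × Fin d) ℂ)
    (hLHR : ∀ p q : Fin (2 * K + 1) × Fin d, LHR p q =
      (if p = q then
        Complex.I * ((ωf : ℂ) + ((((p.1 : ℤ) - (K : ℤ)) : ℤ) : ℂ) * (ω₀ : ℂ))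
       else 0)
      - Jhat (((p.1 : ℤ) - (K : ℤ)) - ((q.1 : ℤ) - (K : ℤ))) p.2 q.2)
    (BHR : Matrix (Fin (2 * K + 1) × Fin d) (Fin (2 * K + 1) × Fin m) ℂ)
    (hBHR : ∀ p q, BHR p q = if p.1 = q.1 then B p.2 q.2 else 0) :
    (IsUnit LTS ↔ IsUnit LHR) ∧
      (IsUnit LTS → opNorm (LTS⁻¹ * BTS) = opNorm (LHR⁻¹ * BHR)) := by
  have hUdU : tsrKron K d * (tsrKron K d)ᴴ = 1 := tsrKron_mul_conjTranspose K d
  have hUdU' : (tsrKron K d)ᴴ * tsrKron K d = 1 := tsrKron_conjTranspose_mul K d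
  have hUmU : tsrKron K m * (tsrKron K m)ᴴ = 1 := tsrKron_mul_conjTranspose K m
  have hUmU' : (tsrKron K m)ᴴ * tsrKron K m = 1 := tsrKron_conjTranspose_mul K m
  have hFD := tsr_FD K D hD
  -- Intertwining relation for the B blocks
  have h2 : tsrKron K d * BTS = BHR * tsrKron K m := by
    ext ⟨k, a⟩ ⟨j, c⟩
    rw [Matrix.mul_apply, Matrix.mul_apply, Fintype.sum_prod_type, Fintype.sum_prod_type]
    have hL : ∑ j' : Fin (2*K+1), ∑ b : Fin d,
        tsrKron K d (k,a) (j',b) * BTS (j',b) (j,c) = tsrF K k j * B a c := by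
      rw [Finset.sum_eq_single j]
      · rw [Finset.sum_eq_single a]
        · rw [tsrKron_apply, hBTS]
          simp
        · intro b _ hba
          rw [tsrKron_apply, if_neg (fun h : a = b => hba h.symm), mul_zero, zero_mul]
        · intro h; exact absurd (Finset.mem_univ a) h
      · intro j'' _ hj''
        apply Finset.sum_eq_zero
        intro b _
        rw [hBTS]
        simp [hj'']
      · intro h; exact absurd (Finset.mem_univ j) h
    have hR : ∑ l : Fin (2*K+1), ∑ b : Fin m,
        BHR (k,a) (l,b) * tsrKron K m (l,b) (j,c) = B a c * tsrF K k j := by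
      rw [Finset.sum_eq_single k]
      · rw [Finset.sum_eq_single c]
        · rw [tsrKron_apply, hBHR]
          simp
        · intro b _ hbc
          rw [tsrKron_apply, if_neg hbc, mul_zero, mul_zero]
        · intro h; exact absurd (Finset.mem_univ c) h
      · intro l _ hl
        apply Finset.sum_eq_zero
        intro b _
        rw [hBHR]
        rw [if_neg (show ¬ ((k,a) : Fin (2*K+1) × Fin d).1 = ((l,b) : Fin (2*K+1) × Fin m).1
          from fun h : k = l => hl h.symm), zero_mul]
      · intro h; exact absurd (Finset.mem_univ k) h
    rw [hL, hR, mul_comm]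
  -- Intertwining relation for the L operators
  have h1 : tsrKron K d * LTS = LHR * tsrKron K d := by
    ext ⟨k, a⟩ ⟨j, c⟩
    rw [Matrix.mul_apply, Matrix.mul_apply, Fintype.sum_prod_type, Fintype.sum_prod_type]
    have hLb : ∀ j' : Fin (2*K+1), ∑ b : Fin d, tsrKron K d (k,a) (j',b) * LTS (j',b) (j,c)
        = tsrF K k j' * LTS (j',a) (j,c) := by
      intro j'
      rw [Finset.sum_eq_single a]
      · rw [tsrKron_apply]; simp
      · intro b _ hba
        rw [tsrKron_apply, if_neg (fun h : a = b => hba h.symm), mul_zero, zero_mul]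
      · intro h; exact absurd (Finset.mem_univ a) h
    rw [Finset.sum_congr rfl (fun j' _ => hLb j')]
    have hsplit : ∑ j' : Fin (2*K+1), tsrF K k j' * LTS (j',a) (j,c)
        = (∑ j' : Fin (2*K+1), tsrF K k j'
            * (if j' = j then (if a = c then Complex.I * (ωf:ℂ) else 0) - J j' a c else 0))
          + (∑ j' : Fin (2*K+1), tsrF K k j'
            * ((ω₀:ℂ) * D j' j * (if a = c then 1 else 0))) := by
      rw [← Finset.sum_add_distrib]
      refine Finset.sum_congr rfl fun j' _ => ?_
      rw [hLTS]
      ring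
    rw [hsplit]
    have hS1 : ∑ j' : Fin (2*K+1), tsrF K k j'
          * (if j' = j then (if a = c then Complex.I * (ωf:ℂ) else 0) - J j' a c else 0)
        = tsrF K k j * ((if a = c then Complex.I * (ωf:ℂ) else 0) - J j a c) := by
      rw [Finset.sum_eq_single j]
      · rw [if_pos rfl]
      · intro j'' _ h; rw [if_neg h, mul_zero]
      · intro h; exact absurd (Finset.mem_univ j) h
    have hS2 : ∑ j' : Fin (2*K+1), tsrF K k j' * ((ω₀:ℂ) * D j' j * (if a = c then 1 else 0))
        = (ω₀:ℂ) * (if a = c then 1 else 0)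
          * (Complex.I * ((((k:ℤ)-(K:ℤ)):ℤ):ℂ) * tsrF K k j) := by
      have hfd := congrFun (congrFun hFD k) j
      rw [Matrix.mul_apply, Matrix.of_apply] at hfd
      calc ∑ j' : Fin (2*K+1), tsrF K k j' * ((ω₀:ℂ) * D j' j * (if a = c then 1 else 0))
          = (ω₀:ℂ) * (if a = c then 1 else 0) * ∑ j' : Fin (2*K+1), tsrF K k j' * D j' j := by
            rw [Finset.mul_sum]
            exact Finset.sum_congr rfl fun j' _ => by ring
        _ = _ := by rw [hfd]
    rw [hS1, hS2]
    have hRb : ∀ l : Fin (2*K+1), ∑ b : Fin d, LHR (k,a) (l,b) * tsrKron K d (l,b) (j,c)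
        = LHR (k,a) (l,c) * tsrF K l j := by
      intro l
      rw [Finset.sum_eq_single c]
      · rw [tsrKron_apply]; simp
      · intro b _ hbc
        rw [tsrKron_apply, if_neg hbc, mul_zero, mul_zero]
      · intro h; exact absurd (Finset.mem_univ c) h
    rw [Finset.sum_congr rfl (fun l _ => hRb l)]
    have hsplitR : ∑ l : Fin (2*K+1), LHR (k,a) (l,c) * tsrF K l j
        = (∑ l : Fin (2*K+1), (if (k,a) = (l,c) then
              Complex.I * ((ωf:ℂ) + ((((k:ℤ) - (K:ℤ)):ℤ):ℂ) * (ω₀:ℂ)) else 0) * tsrF K l j)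
          - (∑ l : Fin (2*K+1),
              Jhat ((((k:ℤ) - (K:ℤ))) - (((l:ℤ) - (K:ℤ)))) a c * tsrF K l j) := by
      rw [← Finset.sum_sub_distrib]
      refine Finset.sum_congr rfl fun l _ => ?_
      rw [hLHR]
      ring
    rw [hsplitR]
    have hT1 : ∑ l : Fin (2*K+1), (if (k,a) = (l,c) then
            Complex.I * ((ωf:ℂ) + ((((k:ℤ) - (K:ℤ)):ℤ):ℂ) * (ω₀:ℂ)) else 0) * tsrF K l j
        = (if a = c then
            Complex.I * ((ωf:ℂ) + ((((k:ℤ) - (K:ℤ)):ℤ):ℂ) * (ω₀:ℂ)) * tsrF K k j else 0) := by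
      rw [Finset.sum_eq_single k]
      · by_cases hac : a = c
        · rw [if_pos (by rw [hac]), if_pos hac]
        · rw [if_neg (by simp [Prod.ext_iff, hac]), if_neg hac, zero_mul]
      · intro l _ hl
        rw [if_neg (by simp [Prod.ext_iff]; intro h; exact absurd h.symm hl), zero_mul]
      · intro h; exact absurd (Finset.mem_univ k) h
    rw [hT1, tsr_JF K d J Jhat hJhat k j a c]
    by_cases hac : a = c
    · subst hac
      simp only [if_pos rfl, if_true]
      ring
    · simp only [if_neg hac]
      ring
  -- Conjugation identities
  have hLHR_eq : LHR = tsrKron K d * LTS * (tsrKron K d)ᴴ := by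
    rw [h1, Matrix.mul_assoc, hUdU, Matrix.mul_one]
  have hLTS_eq : LTS = (tsrKron K d)ᴴ * LHR * tsrKron K d := by
    calc LTS = ((tsrKron K d)ᴴ * tsrKron K d) * LTS := by rw [hUdU', Matrix.one_mul]
      _ = (tsrKron K d)ᴴ * (tsrKron K d * LTS) := by rw [Matrix.mul_assoc]
      _ = (tsrKron K d)ᴴ * (LHR * tsrKron K d) := by rw [h1]
      _ = (tsrKron K d)ᴴ * LHR * tsrKron K d := by rw [Matrix.mul_assoc]
  have hBHR_eq : BHR = tsrKron K d * BTS * (tsrKron K m)ᴴ := by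
    rw [h2, Matrix.mul_assoc, hUmU, Matrix.mul_one]
  have hUdunit : IsUnit (tsrKron K d) :=
    ⟨⟨tsrKron K d, (tsrKron K d)ᴴ, hUdU, hUdU'⟩, rfl⟩
  have hUdHunit : IsUnit (tsrKron K d)ᴴ :=
    ⟨⟨(tsrKron K d)ᴴ, tsrKron K d, hUdU', hUdU⟩, rfl⟩
  have hiff : IsUnit LTS ↔ IsUnit LHR := by
    constructor
    · intro h
      rw [hLHR_eq]
      exact (hUdunit.mul h).mul hUdHunit
    · intro h
      rw [hLTS_eq]
      exact (hUdHunit.mul h).mul hUdunit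
  refine ⟨hiff, fun hunit => ?_⟩
  have hLHRinv : LHR⁻¹ = tsrKron K d * LTS⁻¹ * (tsrKron K d)ᴴ := by
    rw [hLHR_eq, Matrix.mul_inv_rev, Matrix.mul_inv_rev]
    rw [Matrix.inv_eq_left_inv hUdU, Matrix.inv_eq_left_inv hUdU']
    rw [Matrix.mul_assoc]
  have hprod : LHR⁻¹ * BHR = tsrKron K d * (LTS⁻¹ * BTS) * (tsrKron K m)ᴴ := by
    rw [hLHRinv, hBHR_eq]
    calc tsrKron K d * LTS⁻¹ * (tsrKron K d)ᴴ * (tsrKron K d * BTS * (tsrKron K m)ᴴ)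
        = tsrKron K d * LTS⁻¹ * ((tsrKron K d)ᴴ * tsrKron K d) * (BTS * (tsrKron K m)ᴴ) := by
          simp only [Matrix.mul_assoc]
      _ = tsrKron K d * (LTS⁻¹ * BTS) * (tsrKron K m)ᴴ := by
          rw [hUdU', Matrix.mul_one]
          simp only [Matrix.mul_assoc]
  rw [hprod, opNorm_eq_l2, opNorm_eq_l2]
  exact (tsr_opnorm_conj (tsrKron K d) (tsrKron K m) (LTS⁻¹ * BTS) hUdU' hUmU' hUmU).symm
end

section
/- Let N = 2K + 1 be odd, let θ_j = 2πj/N for j = 0, …, N−1, and let D ∈ ℂ^{N×N} be the Fourier spectral differentiation matrix with entries D_{jk} = (1/2)(−1)^{j−k} / sin(π(j−k)/N) for j ≠ k and D_{jj} = 0. Then for every integer k with |k| ≤ K, the vector v ∈ ℂ^N with components v_j = e^{i k θ_j} satisfies D v = i k v; that is, D exactly differentiates each resolvable Fourier mode. -/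
open Finset Complex

lemma pair_inv (w : ℂ) (hw0 : w ≠ 0) (hw1 : w ≠ 1) :
    (w - 1)⁻¹ + (w⁻¹ - 1)⁻¹ = -1 := by
  have h : w - 1 ≠ 0 := sub_ne_zero.mpr hw1
  have h1' : (1:ℂ) - w ≠ 0 := sub_ne_zero.mpr (Ne.symm hw1)
  have hrw : w⁻¹ - 1 = (1 - w)/w := by field_simp
  rw [hrw]
  rw [inv_div]
  field_simp
  ring

lemma T0_sum (K : ℕ) (ω : ℂ) (h1 : ω ^ (2*K+1) = 1)
    (h2 : ∀ m : ℕ, 0 < m → m < 2*K+1 → ω ^ m ≠ 1) :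
    ∑ m ∈ Finset.Ioo 0 (2*K+1), (ω ^ m - 1)⁻¹ = -(K : ℂ) := by
  have hω0 : ω ≠ 0 := by
    intro h; rw [h] at h1; simp at h1
  set N := 2*K+1 with hN
  have hrei : ∑ m ∈ Finset.Ioo 0 N, (ω ^ m - 1)⁻¹
      = ∑ m ∈ Finset.Ioo 0 N, (ω ^ (N - m) - 1)⁻¹ := by
    apply Finset.sum_nbij' (fun m => N - m) (fun m => N - m)
    · intro a ha; simp only [Finset.mem_Ioo] at *; omega
    · intro a ha; simp only [Finset.mem_Ioo] at *; omega
    · intro a ha; simp only [Finset.mem_Ioo] at ha; omega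
    · intro a ha; simp only [Finset.mem_Ioo] at ha; omega
    · intro a ha; simp only [Finset.mem_Ioo] at ha
      have : N - (N - a) = a := by omega
      rw [this]
  have hdouble : (∑ m ∈ Finset.Ioo 0 N, (ω ^ m - 1)⁻¹) * 2
      = ∑ m ∈ Finset.Ioo 0 N, ((ω ^ m - 1)⁻¹ + (ω ^ (N - m) - 1)⁻¹) := by
    rw [Finset.sum_add_distrib, ← hrei]; ring
  have hpairs : ∑ m ∈ Finset.Ioo 0 N, ((ω ^ m - 1)⁻¹ + (ω ^ (N - m) - 1)⁻¹)
      = ∑ m ∈ Finset.Ioo 0 N, (-1 : ℂ) := by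
    apply Finset.sum_congr rfl
    intro m hm
    simp only [Finset.mem_Ioo] at hm
    have hinv : ω ^ (N - m) = (ω ^ m)⁻¹ := by
      have hh : ω ^ (N - m) * ω ^ m = 1 := by
        rw [← pow_add, Nat.sub_add_cancel (le_of_lt hm.2)]; exact h1
      have hm0 : ω ^ m ≠ 0 := pow_ne_zero _ hω0
      field_simp
      linear_combination hh
    rw [hinv]
    exact pair_inv _ (pow_ne_zero _ hω0) (h2 m hm.1 hm.2)
  rw [hpairs, Finset.sum_const] at hdouble
  have hcard : (Finset.Ioo 0 N).card = 2*K := by simp [hN]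
  rw [hcard] at hdouble
  have key : (∑ m ∈ Finset.Ioo 0 N, (ω ^ m - 1)⁻¹) * 2 = -(K:ℂ) * 2 := by
    rw [hdouble]; ring
  exact mul_right_cancel₀ two_ne_zero key

lemma geom_zint (w : ℂ) (hw0 : w ≠ 0) (hw1 : w ≠ 1) (N : ℕ) (hwN : w ^ N = 1)
    (a : ℤ) (haN : a ≤ N) :
    ∑ t ∈ Finset.Ico a (N : ℤ), w ^ t = (1 - w ^ a) / (w - 1) := by
  have hre : ∑ t ∈ Finset.Ico a (N : ℤ), w ^ t
      = ∑ s ∈ Finset.range ((N : ℤ) - a).toNat, w ^ a * w ^ s := by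
    apply Finset.sum_nbij' (fun t => (t - a).toNat) (fun s => a + (s : ℤ))
    · intro t ht; simp only [Finset.mem_Ico] at ht; simp only [Finset.mem_range]; omega
    · intro s hs; simp only [Finset.mem_range] at hs; simp only [Finset.mem_Ico]; omega
    · intro t ht; simp only [Finset.mem_Ico] at ht; omega
    · intro s hs; simp only [Finset.mem_range] at hs; omega
    · intro t ht; simp only [Finset.mem_Ico] at ht
      rw [← zpow_natCast w ((t - a).toNat)]
      rw [← zpow_add₀ hw0]
      congr 1
      omega
  rw [hre, ← Finset.mul_sum, geom_sum_eq hw1]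
  have hpow : w ^ (((N : ℤ) - a).toNat) = w ^ ((N : ℤ) - a) := by
    rw [← zpow_natCast]; congr 1; omega
  rw [hpow]
  have hd : w - 1 ≠ 0 := sub_ne_zero.mpr hw1
  have hNz : w ^ (N : ℤ) = 1 := by rw [zpow_natCast]; exact hwN
  field_simp
  rw [zpow_sub₀ hw0, hNz]
  have haz : w ^ a ≠ 0 := zpow_ne_zero _ hw0
  field_simp

lemma key_sum (K : ℕ) (ω : ℂ) (h1 : ω ^ (2*K+1) = 1)
    (h2 : ∀ m : ℕ, 0 < m → m < 2*K+1 → ω ^ m ≠ 1)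
    (hT0 : ∑ m ∈ Finset.Ioo 0 (2*K+1), (ω ^ m - 1)⁻¹ = -(K : ℂ))
    (a : ℤ) (ha1 : 1 ≤ a) (haN : a ≤ 2*K+1) :
    ∑ m ∈ Finset.Ioo 0 (2*K+1), (ω ^ m) ^ a / (ω ^ m - 1) = (K : ℂ) + 1 - a := by
  have hω0 : ω ≠ 0 := by intro h; rw [h] at h1; simp at h1
  set N := 2*K+1 with hN
  have hterm : ∀ m ∈ Finset.Ioo 0 N,
      (ω ^ m) ^ a / (ω ^ m - 1)
        = (ω ^ m - 1)⁻¹ - ∑ t ∈ Finset.Ico a (N : ℤ), (ω ^ m) ^ t := by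
    intro m hm
    simp only [Finset.mem_Ioo] at hm
    have hw0 : ω ^ m ≠ 0 := pow_ne_zero _ hω0
    have hw1 : ω ^ m ≠ 1 := h2 m hm.1 hm.2
    have hwN : (ω ^ m) ^ N = 1 := by
      rw [← pow_mul, mul_comm, pow_mul, h1, one_pow]
    rw [geom_zint (ω ^ m) hw0 hw1 N hwN a (by exact_mod_cast haN)]
    have hd : ω ^ m - 1 ≠ 0 := sub_ne_zero.mpr hw1
    field_simp
    ring
  rw [Finset.sum_congr rfl hterm, Finset.sum_sub_distrib, hT0]
  have hswap : ∑ m ∈ Finset.Ioo 0 N, ∑ t ∈ Finset.Ico a (N : ℤ), (ω ^ m) ^ t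
      = ∑ t ∈ Finset.Ico a (N : ℤ), ∑ m ∈ Finset.Ioo 0 N, (ω ^ t) ^ m := by
    rw [Finset.sum_comm]
    apply Finset.sum_congr rfl
    intro t _
    apply Finset.sum_congr rfl
    intro m _
    rw [← zpow_natCast (ω ^ t) m, ← zpow_natCast ω m, ← zpow_mul, ← zpow_mul, mul_comm]
  rw [hswap]
  have hinner : ∀ t ∈ Finset.Ico a (N : ℤ), ∑ m ∈ Finset.Ioo 0 N, (ω ^ t) ^ m = -1 := by
    intro t ht
    simp only [Finset.mem_Ico] at ht
    set x := ω ^ t with hx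
    have hxnat : x = ω ^ t.toNat := by rw [hx, ← zpow_natCast]; congr 1; omega
    have h0t : 0 < t.toNat := by omega
    have hlt : t.toNat < N := by omega
    have hx1 : x ≠ 1 := by
      rw [hxnat]; exact h2 t.toNat h0t hlt
    have hxN : x ^ N = 1 := by
      rw [hxnat, ← pow_mul, mul_comm, pow_mul, h1, one_pow]
    have herase : Finset.Ioo 0 N = (Finset.range N).erase 0 := by
      ext i; simp [Finset.mem_Ioo, Finset.mem_range]; omega
    rw [herase, Finset.sum_erase_eq_sub (by simp [hN]), geom_sum_eq hx1, hxN]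
    simp
  rw [Finset.sum_congr rfl hinner, Finset.sum_const, Int.card_Ico]
  have hnn : (0:ℤ) ≤ (N : ℤ) - a := by omega
  have hc : ((((N : ℤ) - a).toNat : ℕ) : ℂ) = (N : ℂ) - a := by
    rw [← Int.cast_natCast (R := ℂ), Int.toNat_of_nonneg hnn]
    push_cast
    ring
  rw [nsmul_eq_mul, hc]
  push_cast [hN]
  ring

lemma entry_formula (K : ℕ) (d : ℤ)
    (hd : Complex.exp (2*(Real.pi:ℂ)*Complex.I/((2*K+1:ℕ):ℂ)) ^ d ≠ 1) :
    (1/2) * (-1:ℂ)^d / Complex.sin ((Real.pi:ℂ) * (d:ℂ) / ((2*K+1:ℕ):ℂ))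
      = Complex.I * (Complex.exp (2*(Real.pi:ℂ)*Complex.I/((2*K+1:ℕ):ℂ)) ^ d) ^ ((K:ℤ)+1)
        / (Complex.exp (2*(Real.pi:ℂ)*Complex.I/((2*K+1:ℕ):ℂ)) ^ d - 1) := by
  have hNC : ((2*K+1:ℕ):ℂ) ≠ 0 := Nat.cast_ne_zero.mpr (by omega)
  set x : ℂ := (Real.pi:ℂ) * (d:ℂ) / ((2*K+1:ℕ):ℂ) with hx
  set z : ℂ := Complex.exp (x * Complex.I) with hz
  have hz0 : z ≠ 0 := Complex.exp_ne_zero _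
  have hsin : Complex.sin x = (z⁻¹ - z) * Complex.I / 2 := by
    rw [Complex.sin, neg_mul, Complex.exp_neg]
  have hz2 : z^2 = Complex.exp (2*(Real.pi:ℂ)*Complex.I/((2*K+1:ℕ):ℂ)) ^ d := by
    rw [show Complex.exp (2*(Real.pi:ℂ)*Complex.I/((2*K+1:ℕ):ℂ)) ^ d
        = Complex.exp ((d:ℂ) * (2*(Real.pi:ℂ)*Complex.I/((2*K+1:ℕ):ℂ))) from
      (Complex.exp_int_mul _ d).symm]
    rw [hz, ← Complex.exp_nat_mul]
    congr 1
    rw [hx]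
    push_cast
    ring
  have hzN : z ^ (2*K+1) = (-1:ℂ)^d := by
    rw [hz, ← Complex.exp_nat_mul]
    rw [show ((2*K+1:ℕ):ℂ) * (x * Complex.I) = (d:ℂ) * ((Real.pi:ℂ) * Complex.I) from by
      rw [hx]
      have hNC2 : (2*(K:ℂ)+1) ≠ 0 := by push_cast at hNC; exact_mod_cast hNC
      field_simp]
    rw [Complex.exp_int_mul, Complex.exp_pi_mul_I]
  have hz2ne : z^2 ≠ 1 := by rw [hz2]; exact hd
  have hzsub : z⁻¹ - z ≠ 0 := by
    intro h
    apply hz2ne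
    have h' : z⁻¹ = z := sub_eq_zero.mp h
    calc z^2 = z * z := sq z
    _ = z * z⁻¹ := by rw [h']
    _ = 1 := mul_inv_cancel₀ hz0
  have hz21 : z^2 - 1 ≠ 0 := sub_ne_zero.mpr hz2ne
  have hpow : (Complex.exp (2*(Real.pi:ℂ)*Complex.I/((2*K+1:ℕ):ℂ)) ^ d) ^ ((K:ℤ)+1)
      = z ^ (2*(K+1)) := by
    rw [← hz2]
    rw [show ((K:ℤ)+1) = ((K+1:ℕ):ℤ) from by push_cast; ring]
    rw [zpow_natCast, ← pow_mul]
  rw [hsin, hpow, ← hz2, ← hzN]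
  have hden : (z⁻¹ - z) * Complex.I / 2 ≠ 0 := by
    apply div_ne_zero _ two_ne_zero
    exact mul_ne_zero hzsub Complex.I_ne_zero
  rw [div_eq_div_iff hden hz21]
  linear_combination (-(z^(2*(K+1)) * (z⁻¹ - z))/2) * Complex.I_sq
    + ((1/2:ℂ) * z^(2*K+1)) * (mul_inv_cancel₀ hz0)

/-- **The Fourier spectral differentiation matrix exactly differentiates resolvable modes.**
With `N = 2K+1` odd, collocation points `θ_j = 2πj/N`, and `D` the Fourier spectral
differentiation matrix (`D_{jk} = (1/2)(-1)^{j-k}/sin(π(j-k)/N)` off-diagonal, `0` on the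
diagonal), every integer `k` with `|k| ≤ K` and the mode `v_j = e^{i k θ_j}` satisfy
`D v = i k v`. -/
theorem spectral_diff_matrix_eigenmode
    (K : ℕ) (D : Matrix (Fin (2 * K + 1)) (Fin (2 * K + 1)) ℂ)
    (hD : ∀ j l : Fin (2 * K + 1), D j l =
      if j = l then 0 else
        (1 / 2) * (-1 : ℂ) ^ ((j : ℤ) - (l : ℤ))
          / Complex.sin ((Real.pi : ℂ) * (((j : ℤ) - (l : ℤ) : ℤ) : ℂ) / ((2 * K + 1 : ℕ) : ℂ)))
    (k : ℤ) (hk : |k| ≤ (K : ℤ)) (v : Fin (2 * K + 1) → ℂ)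
    (hv : ∀ j : Fin (2 * K + 1), v j =
      Complex.exp (Complex.I * (k : ℂ) * ((2 * Real.pi * (j : ℕ) / (2 * K + 1 : ℕ) : ℝ) : ℂ))) :
    D.mulVec v = (Complex.I * (k : ℂ)) • v := by
  obtain ⟨hk1, hk2⟩ := abs_le.mp hk
  set ω : ℂ := Complex.exp (2*(Real.pi:ℂ)*Complex.I/((2*K+1:ℕ):ℂ)) with hωdef
  have hprim : IsPrimitiveRoot ω (2*K+1) := Complex.isPrimitiveRoot_exp _ (by omega)
  have h1 : ω ^ (2*K+1) = 1 := hprim.pow_eq_one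
  have h2 : ∀ m : ℕ, 0 < m → m < 2*K+1 → ω ^ m ≠ 1 := fun m hm hm' =>
    hprim.pow_ne_one_of_pos_of_lt hm.ne' hm'
  have hω0 : ω ≠ 0 := Complex.exp_ne_zero _
  -- ω^c depends only on c mod N
  have hzcongr : ∀ c e : ℤ, (2*K+1:ℤ) ∣ (c - e) → ω ^ c = ω ^ e := by
    rintro c e ⟨t, ht⟩
    have hc : c = e + (2*K+1:ℤ) * t := by linarith
    rw [hc, zpow_add₀ hω0, zpow_mul]
    rw [show ((2*K+1:ℤ)) = ((2*K+1:ℕ):ℤ) from by push_cast; ring]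
    rw [zpow_natCast, h1, one_zpow, mul_one]
  funext j
  simp only [Matrix.mulVec, dotProduct, Pi.smul_apply, smul_eq_mul]
  set a : ℤ := (K:ℤ) + 1 - k with ha
  set F : Fin (2*K+1) → ℂ := fun m =>
    if m = 0 then 0 else
      Complex.I * v j * (ω ^ (m:ℕ)) ^ a / (ω ^ (m:ℕ) - 1) with hF
  -- the divisibility fact for Fin subtraction
  have hdvd : ∀ l : Fin (2*K+1),
      (2*K+1:ℤ) ∣ ((j:ℤ) - (l:ℤ) - (((j - l : Fin (2*K+1)) : ℕ) : ℤ)) := by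
    intro l
    have hfin : ((j - l : Fin (2*K+1)) : ℕ) = ((2*K+1) - (l:ℕ) + (j:ℕ)) % (2*K+1) := by
      rw [Fin.sub_def]
    have hle : (l:ℕ) ≤ 2*K+1 := le_of_lt l.isLt
    set R : ℤ := (((2*K+1) - (l:ℕ) + (j:ℕ) : ℕ) : ℤ) with hR
    have hcast : (((j - l : Fin (2*K+1)) : ℕ) : ℤ) = R % (2*K+1:ℤ) := by
      rw [hfin, hR]
      push_cast
      ring
    have hRval : R = (2*K+1:ℤ) - (l:ℕ) + (j:ℕ) := by
      rw [hR]; push_cast [hle]; ring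
    have hdm := Int.mul_ediv_add_emod R (2*K+1:ℤ)
    refine ⟨R / (2*K+1:ℤ) - 1, ?_⟩
    rw [hcast]
    linarith [hdm, hRval]
  have hωshift : ∀ l : Fin (2*K+1),
      ω ^ ((j:ℤ) - (l:ℤ)) = ω ^ (((j - l : Fin (2*K+1)) : ℕ)) := by
    intro l
    rw [← zpow_natCast ω]
    exact hzcongr _ _ (hdvd l)
  -- termwise identity
  have hterm : ∀ l : Fin (2*K+1), D j l * v l = F (Equiv.subLeft j l) := by
    intro l
    simp only [Equiv.subLeft_apply]
    by_cases hjl : j = l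
    · subst hjl
      rw [hD, if_pos rfl, zero_mul, hF]
      simp
    · have hsub0 : j - l ≠ 0 := fun h => hjl (by rwa [sub_eq_zero] at h)
      have hval0 : 0 < ((j - l : Fin (2*K+1)) : ℕ) := by
        rcases Nat.eq_zero_or_pos ((j - l : Fin (2*K+1)) : ℕ) with h | h
        · exact absurd (Fin.ext h) hsub0
        · exact h
      have hvallt : ((j - l : Fin (2*K+1)) : ℕ) < 2*K+1 := (j - l).isLt
      have hne1 : ω ^ ((j:ℤ) - (l:ℤ)) ≠ 1 := by
        rw [hωshift l]
        exact h2 _ hval0 hvallt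
      -- shift the mode
      have hvshift : v l = v j * (ω ^ ((j:ℤ) - (l:ℤ))) ^ (-k) := by
        rw [hv l, hv j, hωdef]
        rw [show Complex.exp (2*(Real.pi:ℂ)*Complex.I/((2*K+1:ℕ):ℂ)) ^ ((j:ℤ) - (l:ℤ))
            = Complex.exp (((((j:ℤ) - (l:ℤ) : ℤ)):ℂ) * (2*(Real.pi:ℂ)*Complex.I/((2*K+1:ℕ):ℂ))) from
          (Complex.exp_int_mul _ _).symm]
        rw [show Complex.exp (((((j:ℤ) - (l:ℤ) : ℤ)):ℂ) * (2*(Real.pi:ℂ)*Complex.I/((2*K+1:ℕ):ℂ))) ^ (-k)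
            = Complex.exp (((-k : ℤ):ℂ) * (((((j:ℤ) - (l:ℤ) : ℤ)):ℂ) * (2*(Real.pi:ℂ)*Complex.I/((2*K+1:ℕ):ℂ)))) from
          (Complex.exp_int_mul _ _).symm]
        rw [← Complex.exp_add]
        congr 1
        push_cast
        ring
      rw [hD, if_neg hjl, entry_formula K _ (by rw [← hωdef]; exact hne1), hvshift]
      rw [← hωdef]
      have hx0 : ω ^ ((j:ℤ) - (l:ℤ)) ≠ 0 := zpow_ne_zero _ hω0
      have hcomb : (ω ^ ((j:ℤ) - (l:ℤ))) ^ ((K:ℤ)+1) * (ω ^ ((j:ℤ) - (l:ℤ))) ^ (-k)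
          = (ω ^ ((j:ℤ) - (l:ℤ))) ^ a := by
        have he : (K:ℤ)+1 + -k = a := by rw [ha]; ring
        rw [← zpow_add₀ hx0, he]
      rw [hF]
      simp only [if_neg hsub0]
      rw [← hωshift l]
      linear_combination (Complex.I * v j * (ω ^ ((j:ℤ) - (l:ℤ)) - 1)⁻¹) * hcomb
  rw [Finset.sum_congr rfl (fun l _ => hterm l)]
  rw [Equiv.sum_comp (Equiv.subLeft j) F]
  -- now evaluate ∑ F
  have hsum1 : ∑ m : Fin (2*K+1), F m
      = ∑ i ∈ Finset.range (2*K+1),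
          (if i = 0 then (0:ℂ) else Complex.I * v j * (ω ^ i) ^ a / (ω ^ i - 1)) := by
    rw [← Fin.sum_univ_eq_sum_range
      (fun i => if i = 0 then (0:ℂ) else Complex.I * v j * (ω ^ i) ^ a / (ω ^ i - 1)) (2*K+1)]
    apply Finset.sum_congr rfl
    intro m _
    rw [hF]
    simp only [Fin.ext_iff, Fin.val_zero]
  have hins : Finset.range (2*K+1) = insert 0 (Finset.Ioo 0 (2*K+1)) := by
    ext i
    simp only [Finset.mem_range, Finset.mem_insert, Finset.mem_Ioo]
    omega
  rw [hsum1, hins, Finset.sum_insert (by simp), if_pos rfl, zero_add]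
  have hcong : ∀ i ∈ Finset.Ioo 0 (2*K+1),
      (if i = 0 then (0:ℂ) else Complex.I * v j * (ω ^ i) ^ a / (ω ^ i - 1))
        = Complex.I * v j * ((ω ^ i) ^ a / (ω ^ i - 1)) := by
    intro i hi
    simp only [Finset.mem_Ioo] at hi
    rw [if_neg (by omega), mul_div_assoc]
  rw [Finset.sum_congr rfl hcong, ← Finset.mul_sum]
  have hT0 := T0_sum K ω h1 h2
  rw [key_sum K ω h1 h2 hT0 a (by omega) (by omega)]
  rw [ha]
  push_cast
  ring
end

section
/- Let n ∈ ℕ and let J : ℝ → ℂ^{n×n} be a matrix-valued function. Let p, q, v : ℝ → ℂⁿ and c : ℝ → ℂ be differentiable, and f : ℝ → ℂⁿ. Assume for all t ∈ ℝ: (i) p′(t) = J(t) p(t); (ii) q′(t) = −J(t)† q(t); (iii) ⟨q(t), p(t)⟩ = 1; (iv) ⟨q(t), v(t)⟩ = 0; and (v) the function η(t) := c(t) p(t) + v(t) satisfies η′(t) = J(t) η(t) + f(t). Then c′(t) = ⟨q(t), f(t)⟩ for all t ∈ ℝ. -/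
open Matrix

/-- The standard complex inner product on `ℂⁿ`, conjugate-linear in the first argument. -/
noncomputable def cinner {n : ℕ} (x y : Fin n → ℂ) : ℂ :=
  ∑ i, (starRingEnd ℂ) (x i) * y i

/-- **Phase drift rate formula.**
If `p′ = J p` (neutral mode), `q′ = -J† q` (adjoint mode), `⟨q, p⟩ ≡ 1`, `⟨q, v⟩ ≡ 0`,
and `η = c·p + v` satisfies `η′ = J η + f`, then `c′(t) = ⟨q(t), f(t)⟩` for all `t`. -/
theorem phase_drift_rate
    (n : ℕ) (J : ℝ → Matrix (Fin n) (Fin n) ℂ)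
    (p q v : ℝ → (Fin n → ℂ)) (c : ℝ → ℂ) (f : ℝ → (Fin n → ℂ))
    (hp : ∀ t : ℝ, HasDerivAt p ((J t).mulVec (p t)) t)
    (hq : ∀ t : ℝ, HasDerivAt q (-((J t)ᴴ.mulVec (q t))) t)
    (hv : Differentiable ℝ v) (hc : Differentiable ℝ c)
    (hqp : ∀ t : ℝ, cinner (q t) (p t) = 1)
    (hqv : ∀ t : ℝ, cinner (q t) (v t) = 0)
    (hη : ∀ t : ℝ, HasDerivAt (fun s : ℝ => c s • p s + v s)
      ((J t).mulVec (c t • p t + v t) + f t) t) :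
    ∀ t : ℝ, deriv c t = cinner (q t) (f t) := by
  intro t
  -- c equals ⟨q, η⟩
  have key : ∀ s : ℝ, c s = ∑ i, (starRingEnd ℂ) (q s i) * (c s • p s + v s) i := by
    intro s
    have h1 : (∑ i, (starRingEnd ℂ) (q s i) * (c s • p s + v s) i)
        = c s * cinner (q s) (p s) + cinner (q s) (v s) := by
      simp only [cinner, Finset.mul_sum, ← Finset.sum_add_distrib]
      refine Finset.sum_congr rfl fun i _ => ?_
      simp [Pi.add_apply, Pi.smul_apply, smul_eq_mul]
      ring
    rw [h1, hqp, hqv]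
    ring
  have hqi : ∀ i, HasDerivAt (fun s => q s i) ((-((J t)ᴴ.mulVec (q t))) i) t :=
    fun i => (hasDerivAt_pi.mp (hq t)) i
  have hηi : ∀ i, HasDerivAt (fun s => (c s • p s + v s) i)
      (((J t).mulVec (c t • p t + v t) + f t) i) t :=
    fun i => (hasDerivAt_pi.mp (hη t)) i
  have hterm : ∀ i, HasDerivAt (fun s => (starRingEnd ℂ) (q s i) * (c s • p s + v s) i)
      ((starRingEnd ℂ) ((-((J t)ᴴ.mulVec (q t))) i) * (c t • p t + v t) i
        + (starRingEnd ℂ) (q t i) * ((J t).mulVec (c t • p t + v t) + f t) i) t := by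
    intro i
    exact ((hqi i).star.mul (hηi i))
  have hsum : HasDerivAt (fun s => ∑ i, (starRingEnd ℂ) (q s i) * (c s • p s + v s) i)
      (∑ i, ((starRingEnd ℂ) ((-((J t)ᴴ.mulVec (q t))) i) * (c t • p t + v t) i
        + (starRingEnd ℂ) (q t i) * ((J t).mulVec (c t • p t + v t) + f t) i)) t :=
    HasDerivAt.fun_sum (fun i _ => hterm i)
  have hcder : HasDerivAt c
      (∑ i, ((starRingEnd ℂ) ((-((J t)ᴴ.mulVec (q t))) i) * (c t • p t + v t) i
        + (starRingEnd ℂ) (q t i) * ((J t).mulVec (c t • p t + v t) + f t) i)) t :=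
    hsum.congr_of_eventuallyEq (Filter.Eventually.of_forall key)
  rw [hcder.deriv]
  set η := c t • p t + v t with hηdef
  have hAB : ∑ i, (starRingEnd ℂ) (((J t)ᴴ.mulVec (q t)) i) * η i
      = ∑ i, (starRingEnd ℂ) (q t i) * ((J t).mulVec η) i := by
    simp only [Matrix.mulVec, dotProduct, conjTranspose_apply, map_sum, _root_.map_mul,
      Finset.sum_mul, Finset.mul_sum, starRingEnd_apply, star_star]
    rw [Finset.sum_comm]
    refine Finset.sum_congr rfl fun i _ => Finset.sum_congr rfl fun j _ => by ring
  have hsplit : (∑ i, ((starRingEnd ℂ) ((-((J t)ᴴ.mulVec (q t))) i) * η i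
      + (starRingEnd ℂ) (q t i) * ((J t).mulVec η + f t) i))
      = -(∑ i, (starRingEnd ℂ) (((J t)ᴴ.mulVec (q t)) i) * η i)
        + ((∑ i, (starRingEnd ℂ) (q t i) * ((J t).mulVec η) i)
          + ∑ i, (starRingEnd ℂ) (q t i) * f t i) := by
    simp [Pi.neg_apply, map_neg, neg_mul, Pi.add_apply, mul_add, Finset.sum_add_distrib]
  rw [hsplit, hAB, cinner]
  ring
end
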